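/- Let A be a finite nonempty set of positive reals and k ≥ 2 an integer. Let H be the set of lines through the origin in ℝ^k each containing at least |A|^k/(2|A/A|^{k-1}) points of A^k. Then |H| ≥ |A|^{k-1}/2. -/

import Mathlib

open Finset Pointwise

theorem stmt_15 (k : ℕ) (hk : 2 ≤ k) (A : Finset ℝ) (hA : ∀ a ∈ A, 0 < a)
    (hne : A.Nonempty) (H : Set (Set (Fin k → ℝ)))
    (hH : H = {l | (∃ v : Fin k → ℝ, v ≠ 0 ∧ l = {x | ∃ t : ℝ, x = t • v}) ∧
      (A.card : ℝ) ^ k / (2 * ((A / A).card : ℝ) ^ (k - 1)) ≤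
        ((l ∩ {f : Fin k → ℝ | ∀ i, f i ∈ A}).ncard : ℝ)}) :
    (A.card : ℝ) ^ (k - 1) / 2 ≤ (H.ncard : ℝ) := by
  classical
  set n : ℝ := (A.card : ℝ) with hn
  set m : ℝ := ((A / A).card : ℝ) with hm
  have hn0 : 0 < n := by
    rw [hn]; exact_mod_cast Finset.card_pos.mpr hne
  have hm0 : 0 < m := by
    rw [hm]; exact_mod_cast Finset.card_pos.mpr (hne.div hne)
  set T : ℝ := n ^ k / (2 * m ^ (k - 1)) with hT
  have hT0 : 0 < T := by positivity
  set S : Finset (Fin k → ℝ) := Fintype.piFinset (fun _ : Fin k => A) with hSdef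
  have hSmem : ∀ x : Fin k → ℝ, x ∈ S ↔ ∀ i, x i ∈ A := fun x => Fintype.mem_piFinset
  have hScard : (S.card : ℝ) = n ^ k := by
    rw [hSdef, Fintype.card_piFinset, hn]
    push_cast
    simp
  set z : Fin k := ⟨0, by omega⟩ with hz
  set g : (Fin k → ℝ) → (Fin (k - 1) → ℝ) :=
    fun x i => x ⟨i.1 + 1, by omega⟩ / x z with hg
  set v : (Fin (k - 1) → ℝ) → (Fin k → ℝ) :=
    fun c j => if h : j.1 = 0 then 1 else c ⟨j.1 - 1, by omega⟩ with hv
  have hvz : ∀ c, v c z = 1 := by intro c; simp [hv, hz]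
  have hvemb : ∀ (c : Fin (k-1) → ℝ) (i : Fin (k-1)) (h : i.1 + 1 < k), v c ⟨i.1 + 1, h⟩ = c i := by
    intro c i h
    simp only [hv]
    rw [dif_neg (by omega)]
    exact congrArg c (Fin.ext (show i.1 + 1 - 1 = i.1 by omega))
  have hv0 : ∀ c, v c ≠ 0 := by
    intro c h
    have := congrFun h z
    rw [hvz] at this
    simp at this
  -- every point of S is (x z) • v (g x)
  have hxv : ∀ x : Fin k → ℝ, (∀ i, x i ∈ A) → x = x z • v (g x) := by
    intro x hx
    have hz0 : x z ≠ 0 := (hA _ (hx z)).ne'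
    funext j
    rcases Nat.eq_zero_or_pos j.1 with h0 | h0
    · have hjz : j = z := Fin.ext h0
      rw [hjz, Pi.smul_apply, hvz, smul_eq_mul, mul_one]
    · have hj : (v (g x)) j = x j / x z := by
        simp only [hv, hg]
        rw [dif_neg (by omega)]
        congr 1
        exact congrArg x (Fin.ext (show j.1 - 1 + 1 = j.1 by omega))
      rw [Pi.smul_apply, hj, smul_eq_mul, mul_comm, div_mul_cancel₀ _ hz0]
  have hxz0 : ∀ x : Fin k → ℝ, (∀ i, x i ∈ A) → x z ≠ 0 := fun x hx => (hA _ (hx z)).ne'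
  -- g of a nonzero multiple of v c recovers c
  have hgt : ∀ (c : Fin (k - 1) → ℝ) (t : ℝ), t ≠ 0 → g (t • v c) = c := by
    intro c t ht
    funext i
    show (t • v c) ⟨i.1 + 1, by omega⟩ / (t • v c) z = c i
    rw [Pi.smul_apply, Pi.smul_apply, hvemb _ _ (by omega), hvz, smul_eq_mul, smul_eq_mul,
      mul_one, mul_div_cancel_left₀ _ ht]
  set ℓ : (Fin (k - 1) → ℝ) → Set (Fin k → ℝ) := fun c => {y | ∃ t : ℝ, y = t • v c} with hℓ
  have hℓinj : Function.Injective ℓ := by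
    intro c c' hcc
    have h1 : v c' ∈ ℓ c' := ⟨1, (one_smul _ _).symm⟩
    rw [← hcc] at h1
    obtain ⟨t, ht⟩ := h1
    have htz := congrFun ht z
    rw [hvz, Pi.smul_apply, hvz, smul_eq_mul, mul_one] at htz
    funext i
    have h2 := congrFun ht ⟨i.1 + 1, by omega⟩
    rw [Pi.smul_apply, hvemb c' i (by omega), hvemb c i (by omega), smul_eq_mul,
      ← htz, one_mul] at h2
    exact h2.symm
  -- the line of x equals the span of x
  have hℓg : ∀ x : Fin k → ℝ, (∀ i, x i ∈ A) →
      ℓ (g x) = {y : Fin k → ℝ | ∃ s : ℝ, y = s • x} := by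
    intro x hx
    have hz0 : x z ≠ 0 := hxz0 x hx
    have hxe := hxv x hx
    have hve1 : (x z)⁻¹ • x = (x z)⁻¹ • (x z • v (g x)) := by rw [← hxe]
    have hve : (x z)⁻¹ • x = v (g x) := by
      rw [hve1, smul_smul, inv_mul_cancel₀ hz0, one_smul]
    ext y
    simp only [hℓ, Set.mem_setOf_eq]
    constructor
    · rintro ⟨t, rfl⟩
      exact ⟨t * (x z)⁻¹, by rw [← hve, smul_smul]⟩
    · rintro ⟨s, rfl⟩
      refine ⟨s * x z, ?_⟩
      rw [← hve, smul_smul, mul_assoc, mul_inv_cancel₀ hz0, mul_one]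
  -- fiber description
  have hfiber : ∀ x ∈ S, ℓ (g x) ∩ {f : Fin k → ℝ | ∀ i, f i ∈ A} =
      ↑(S.filter (fun y => g y = g x)) := by
    intro x hx
    rw [hSmem] at hx
    ext y
    simp only [Set.mem_inter_iff, Set.mem_setOf_eq, Finset.coe_filter, hℓ, hSmem]
    constructor
    · rintro ⟨⟨t, rfl⟩, hyA⟩
      refine ⟨hyA, ?_⟩
      have ht : t ≠ 0 := by
        intro h0
        subst h0
        have := hA _ (hyA z)
        simp at this
      exact hgt _ _ ht
    · rintro ⟨hyA, hgy⟩
      refine ⟨⟨y z, ?_⟩, hyA⟩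
      rw [← hgy]
      exact hxv y hyA
  set Heavy : Finset (Fin (k - 1) → ℝ) :=
    (S.image g).filter (fun c => T ≤ ((S.filter (fun y => g y = c)).card : ℝ)) with hHeavy
  -- H = ℓ '' Heavy
  have hHeq : H = ℓ '' ↑Heavy := by
    rw [hH]
    ext l
    simp only [Set.mem_setOf_eq, Set.mem_image, Finset.mem_coe, hHeavy, Finset.mem_filter,
      Finset.mem_image]
    constructor
    · rintro ⟨⟨w, hw0, rfl⟩, hcount⟩
      have hpos : ({x : Fin k → ℝ | ∃ t : ℝ, x = t • w} ∩ {f | ∀ i, f i ∈ A}).ncard ≠ 0 := by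
        intro h0
        rw [h0] at hcount
        simp only [Nat.cast_zero] at hcount
        exact absurd hcount (not_le.mpr hT0)
      obtain ⟨x, ⟨t, rfl⟩, hxA⟩ := Set.nonempty_of_ncard_ne_zero hpos
      have hxA' : ∀ i, (t • w) i ∈ A := hxA
      have hxS : t • w ∈ S := (hSmem _).mpr hxA'
      have ht : t ≠ 0 := by
        intro h0
        subst h0
        have := hA _ (hxA' z)
        simp at this
      have hleq : {x : Fin k → ℝ | ∃ s : ℝ, x = s • w} = ℓ (g (t • w)) := by
        rw [hℓg _ hxA']
        ext y
        simp only [Set.mem_setOf_eq]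
        constructor
        · rintro ⟨s, rfl⟩
          exact ⟨s * t⁻¹, by rw [smul_smul, mul_assoc, inv_mul_cancel₀ ht, mul_one]⟩
        · rintro ⟨s, rfl⟩
          exact ⟨s * t, by rw [smul_smul]⟩
      refine ⟨g (t • w), ⟨⟨t • w, hxS, rfl⟩, ?_⟩, hleq.symm⟩
      rw [← Set.ncard_coe_finset, ← hfiber _ hxS, ← hleq]
      exact hcount
    · rintro ⟨c, ⟨⟨x, hxS, rfl⟩, hcount⟩, rfl⟩
      refine ⟨⟨v (g x), hv0 _, rfl⟩, ?_⟩
      rw [hfiber _ hxS, Set.ncard_coe_finset]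
      exact hcount
  have hHcard : (H.ncard : ℝ) = (Heavy.card : ℝ) := by
    rw [hHeq, Set.ncard_image_of_injective _ hℓinj, Set.ncard_coe_finset]
  -- fiber size bound
  have hfib_le : ∀ c : Fin (k - 1) → ℝ, ((S.filter (fun y => g y = c)).card : ℝ) ≤ n := by
    intro c
    have hcard : (S.filter (fun y => g y = c)).card ≤ A.card := by
      apply Finset.card_le_card_of_injOn (fun y => y z)
      · intro y hy
        rw [Finset.mem_coe, Finset.mem_filter, hSmem] at hy
        exact hy.1 z
      · intro y hy y' hy' hzz
        have hzz' : y z = y' z := hzz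
        simp only [Finset.coe_filter, Set.mem_setOf_eq, hSmem] at hy hy'
        rw [hxv y hy.1, hxv y' hy'.1, hy.2, hy'.2, hzz']
    rw [hn]
    exact_mod_cast hcard
  -- image size bound
  have himg_le : ((S.image g).card : ℝ) ≤ m ^ (k - 1) := by
    have hsub : S.image g ⊆ Fintype.piFinset (fun _ : Fin (k - 1) => A / A) := by
      intro c hc
      rw [Finset.mem_image] at hc
      obtain ⟨x, hxS, rfl⟩ := hc
      rw [hSmem] at hxS
      rw [Fintype.mem_piFinset]
      intro i
      exact Finset.div_mem_div (hxS _) (hxS z)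
    have hc2 := Finset.card_le_card hsub
    rw [Fintype.card_piFinset] at hc2
    calc ((S.image g).card : ℝ) ≤ ((∏ _i : Fin (k-1), (A / A).card : ℕ) : ℝ) := by
          exact_mod_cast hc2
      _ = m ^ (k - 1) := by rw [hm]; push_cast; simp
  -- counting
  have hsum : n ^ k = ∑ c ∈ S.image g, ((S.filter (fun y => g y = c)).card : ℝ) := by
    rw [← hScard, Finset.card_eq_sum_card_image g S]
    push_cast
    rfl
  have hsplit : (∑ c ∈ Heavy, ((S.filter (fun y => g y = c)).card : ℝ))
      + ∑ c ∈ (S.image g).filter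
        (fun c => ¬ T ≤ ((S.filter (fun y => g y = c)).card : ℝ)),
        ((S.filter (fun y => g y = c)).card : ℝ)
      = ∑ c ∈ S.image g, ((S.filter (fun y => g y = c)).card : ℝ) := by
    rw [hHeavy]
    exact Finset.sum_filter_add_sum_filter_not _ _ _
  have hheavy_le : ∑ c ∈ Heavy, ((S.filter (fun y => g y = c)).card : ℝ) ≤ Heavy.card * n := by
    calc ∑ c ∈ Heavy, ((S.filter (fun y => g y = c)).card : ℝ)
        ≤ ∑ _c ∈ Heavy, n := Finset.sum_le_sum (fun c _ => hfib_le c)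
      _ = Heavy.card * n := by rw [Finset.sum_const, nsmul_eq_mul]
  have hlight_le : ∑ c ∈ (S.image g).filter
      (fun c => ¬ T ≤ ((S.filter (fun y => g y = c)).card : ℝ)),
      ((S.filter (fun y => g y = c)).card : ℝ) ≤ n ^ k / 2 := by
    set Lt := (S.image g).filter (fun c => ¬ T ≤ ((S.filter (fun y => g y = c)).card : ℝ))
      with hLt
    calc ∑ c ∈ Lt, ((S.filter (fun y => g y = c)).card : ℝ)
        ≤ ∑ _c ∈ Lt, T := by
          apply Finset.sum_le_sum
          intro c hc
          rw [hLt, Finset.mem_filter] at hc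
          exact le_of_not_ge hc.2
      _ = Lt.card * T := by rw [Finset.sum_const, nsmul_eq_mul]
      _ ≤ m ^ (k - 1) * T := by
          apply mul_le_mul_of_nonneg_right _ hT0.le
          calc (Lt.card : ℝ) ≤ ((S.image g).card : ℝ) := by
                exact_mod_cast Finset.card_le_card (Finset.filter_subset _ _)
            _ ≤ m ^ (k - 1) := himg_le
      _ = n ^ k / 2 := by
          have hmk : m ^ (k - 1) ≠ 0 := pow_ne_zero _ hm0.ne'
          rw [hT, mul_comm (2:ℝ) (m ^ (k - 1)), ← div_div, ← mul_div_assoc,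
            mul_comm (m ^ (k - 1)) (n ^ k / m ^ (k - 1)), div_mul_cancel₀ _ hmk]
  have hkey : n ^ k ≤ Heavy.card * n + n ^ k / 2 := by
    calc n ^ k = ∑ c ∈ S.image g, ((S.filter (fun y => g y = c)).card : ℝ) := hsum
      _ = _ := hsplit.symm
      _ ≤ Heavy.card * n + n ^ k / 2 := add_le_add hheavy_le hlight_le
  have hfin : n ^ (k - 1) / 2 ≤ (Heavy.card : ℝ) := by
    have hnk : n ^ k = n ^ (k - 1) * n := by
      rw [← pow_succ]
      congr 1
      omega
    rw [hnk] at hkey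
    have h3 : n ^ (k - 1) / 2 * n ≤ (Heavy.card : ℝ) * n := by
      rw [div_mul_eq_mul_div]
      linarith
    exact le_of_mul_le_mul_right h3 hn0
  rw [hHcard]
  exact hfin
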